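/- For all N > 2, the clique covering number of J(N,2) satisfies θ(J(N,2)) ≥ N − 2. In particular, for any clique cover of J(N,2) consisting of n_A cliques of type A and n_B cliques of type B, with m = N − n_A, one has n_A + n_B ≥ N − m + ⌈binom(m,2)/3⌉ ≥ N − 2. -/

import Mathlib

/-- The Johnson graph `J(N, k)`. -/
def johnson (N k : ℕ) : SimpleGraph {S : Finset (Fin N) // S.card = k} where
  Adj S T := S ≠ T ∧ (S.1 ∩ T.1).card = k - 1
  symm := by
    constructor
    intro S T h
    exact ⟨h.1.symm, by rw [Finset.inter_comm]; exact h.2⟩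
  loopless := by
    constructor
    intro S h
    exact h.1 rfl

/-- The (vertex) clique covering number of a graph. -/
noncomputable def theta {V : Type*} (G : SimpleGraph V) : ℕ :=
  sInf {n | ∃ 𝒞 : Finset (Set V), 𝒞.card = n ∧ (∀ C ∈ 𝒞, G.IsClique C) ∧
    ∀ v, ∃ C ∈ 𝒞, v ∈ C}

private lemma inter_one {N : ℕ} {S T : Finset (Fin N)} (h : (S ∩ T).card = 1) :
    ∃ p, p ∈ S ∧ p ∈ T ∧ ∀ q, q ∈ S → q ∈ T → q = p := by
  obtain ⟨p, hp⟩ := Finset.card_eq_one.mp h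
  have hmem : ∀ q, q ∈ S ∩ T ↔ q = p := by simp [hp]
  have hpS := (hmem p).mpr rfl
  exact ⟨p, (Finset.mem_inter.mp hpS).1, (Finset.mem_inter.mp hpS).2,
    fun q hqS hqT => (hmem q).mp (Finset.mem_inter.mpr ⟨hqS, hqT⟩)⟩

private lemma eq_of_card_two {α : Type*} [DecidableEq α] {W : Finset α} (h : W.card = 2)
    {w p q : α} (hw : w ∈ W) (hp : p ∈ W) (hq : q ∈ W) (hpw : p ≠ w) (hqw : q ≠ w) :
    p = q := by
  obtain ⟨a, b, hab, rfl⟩ := Finset.card_eq_two.mp h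
  simp only [Finset.mem_insert, Finset.mem_singleton] at hw hp hq
  rcases hw with rfl | rfl <;> rcases hp with rfl | rfl <;> rcases hq with rfl | rfl <;> tauto

private lemma johnson_inter {N : ℕ} {C : Set {S : Finset (Fin N) // S.card = 2}}
    (hC : (johnson N 2).IsClique C) {S T : {S : Finset (Fin N) // S.card = 2}}
    (hS : S ∈ C) (hT : T ∈ C) (hne : S ≠ T) :
    ∃ p, p ∈ S.1 ∧ p ∈ T.1 ∧ ∀ q, q ∈ S.1 → q ∈ T.1 → q = p := by
  have := (hC hS hT hne).2
  exact inter_one this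

/-- A clique in `J(N,2)` with no common point has all vertices inside a 3-set. -/
private lemma clique_structure {N : ℕ} (hN : 2 < N)
    {C : Set {S : Finset (Fin N) // S.card = 2}}
    (hC : (johnson N 2).IsClique C) (h : ¬ ∃ x, ∀ S ∈ C, x ∈ S.1) :
    ∃ s : Finset (Fin N), s.card = 3 ∧ ∀ S ∈ C, S.1 ⊆ s := by
  push_neg at h
  have hN0 : (0 : ℕ) < N := by omega
  obtain ⟨S0, hS0, -⟩ := h ⟨0, hN0⟩
  obtain ⟨x, y, hxy, hS0v⟩ := Finset.card_eq_two.mp S0.2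
  have hxS0 : x ∈ S0.1 := by rw [hS0v]; simp
  have hyS0 : y ∈ S0.1 := by rw [hS0v]; simp
  obtain ⟨T, hT, hxT⟩ := h x
  have hST : S0 ≠ T := fun e => hxT (e ▸ hxS0)
  obtain ⟨p, hpS, hpT, hpu⟩ := johnson_inter hC hS0 hT hST
  have hyT : y ∈ T.1 := by
    have : p = y := by
      rw [hS0v] at hpS; simp at hpS
      rcases hpS with rfl | rfl
      · exact absurd hpT hxT
      · rfl
    exact this ▸ hpT
  have hSTu : ∀ q, q ∈ S0.1 → q ∈ T.1 → q = y := by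
    have hpy : p = y := by
      rw [hS0v] at hpS; simp at hpS
      rcases hpS with rfl | rfl
      · exact absurd hpT hxT
      · rfl
    exact hpy ▸ hpu
  clear hpu hpS hpT
  obtain ⟨U, hU, hyU⟩ := h y
  have hUS : U ≠ S0 := fun e => hyU (e ▸ hyS0)
  have hUT : U ≠ T := fun e => hyU (e ▸ hyT)
  obtain ⟨q, hqU, hqS0, hqu⟩ := johnson_inter hC hU hS0 hUS
  have hxU : x ∈ U.1 := by
    have : q = x := by
      rw [hS0v] at hqS0; simp at hqS0
      rcases hqS0 with rfl | rfl
      · rfl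
      · exact absurd hqU hyU
    exact this ▸ hqU
  clear hqu hqU hqS0
  obtain ⟨b, hbU, hbT, hbu⟩ := johnson_inter hC hU hT hUT
  have hby : b ≠ y := fun e => hyU (e ▸ hbU)
  have hbx : b ≠ x := fun e => hxT (e ▸ hbT)
  -- explicit forms
  have hTv : T.1 = {y, b} := by
    refine (Finset.eq_of_subset_of_card_le ?_ ?_).symm
    · intro z hz; simp at hz; rcases hz with rfl | rfl <;> assumption
    · rw [T.2, Finset.card_insert_of_notMem (by simpa using hby.symm), Finset.card_singleton]
  have hUv : U.1 = {x, b} := by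
    refine (Finset.eq_of_subset_of_card_le ?_ ?_).symm
    · intro z hz; simp at hz; rcases hz with rfl | rfl <;> assumption
    · rw [U.2, Finset.card_insert_of_notMem (by simpa using hbx.symm), Finset.card_singleton]
  refine ⟨{x, y, b}, ?_, ?_⟩
  · rw [Finset.card_insert_of_notMem (by simp [hxy, hbx.symm]),
      Finset.card_insert_of_notMem (by simpa using hby.symm), Finset.card_singleton]
  · intro W hW w hw
    by_contra hws
    simp only [Finset.mem_insert, Finset.mem_singleton, not_or] at hws
    obtain ⟨hwx, hwp, hwb⟩ := hws
    have hWS0 : W ≠ S0 := by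
      intro e; rw [e, hS0v] at hw; simp at hw; tauto
    have hWT : W ≠ T := by
      intro e; rw [e, hTv] at hw; simp at hw; tauto
    have hWU : W ≠ U := by
      intro e; rw [e, hUv] at hw; simp at hw; tauto
    obtain ⟨p1, hp1W, hp1S, hp1u⟩ := johnson_inter hC hW hS0 hWS0
    obtain ⟨p2, hp2W, hp2T, hp2u⟩ := johnson_inter hC hW hT hWT
    obtain ⟨p3, hp3W, hp3U, hp3u⟩ := johnson_inter hC hW hU hWU
    have hp1w : p1 ≠ w := by
      intro e; rw [e, hS0v] at hp1S; simp at hp1S; tauto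
    have hp2w : p2 ≠ w := by
      intro e; rw [e, hTv] at hp2T; simp at hp2T; tauto
    have hp3w : p3 ≠ w := by
      intro e; rw [e, hUv] at hp3U; simp at hp3U; tauto
    have h12 : p1 = p2 := eq_of_card_two W.2 hw hp1W hp2W hp1w hp2w
    have h13 : p1 = p3 := eq_of_card_two W.2 hw hp1W hp3W hp1w hp3w
    -- p1 ∈ S0 ∩ T so p1 = y; but y ∉ U while p1 ∈ U
    have hp1y : p1 = y := by
      rw [hS0v] at hp1S; rw [← h12, hTv] at hp2T
      simp at hp1S hp2T
      rcases hp1S with rfl | rfl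
      · rcases hp2T with e | e
        · exact e
        · exact absurd e hbx.symm
      · rfl
    rw [hUv] at hp3U
    rw [← h13, hp1y] at hp3U
    simp at hp3U
    rcases hp3U with e | e
    · exact hxy e.symm
    · exact hby e.symm

private lemma clique_card_le {N : ℕ} (hN : 2 < N)
    {C : Set {S : Finset (Fin N) // S.card = 2}}
    (hC : (johnson N 2).IsClique C) (h : ¬ ∃ x, ∀ S ∈ C, x ∈ S.1) :
    (Set.toFinite C).toFinset.card ≤ 3 := by
  obtain ⟨s, hs3, hsub⟩ := clique_structure hN hC h
  calc (Set.toFinite C).toFinset.card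
      ≤ (s.powersetCard 2).card := by
        apply Finset.card_le_card_of_injOn (fun S => S.1)
        · intro S hS
          rw [Finset.mem_coe, Finset.mem_powersetCard]
          exact ⟨hsub S (by simpa using hS), S.2⟩
        · intro a _ b _ hab
          exact Subtype.ext hab
    _ = 3 := by rw [Finset.card_powersetCard, hs3]; rfl

private lemma arith_bound (N m : ℕ) (hm : m ≤ N) :
    N - 2 ≤ N - m + (Nat.choose m 2 + 2) / 3 := by
  rcases le_or_gt m 2 with h | h
  · omega
  · obtain ⟨k, rfl⟩ : ∃ k, m = k + 3 := ⟨m - 3, by omega⟩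
    have hc : (k + 3).choose 2 = (k + 3) * (k + 2) / 2 := by
      rw [Nat.choose_two_right]; norm_num
    rw [hc]
    have h2 : 2 * ((k + 3) * (k + 2) / 2) = (k + 3) * (k + 2) := by
      apply Nat.mul_div_cancel'
      rcases Nat.even_or_odd k with he | ho
      · obtain ⟨t, rfl⟩ := he; exact ⟨(t + t + 3) * (t + 1), by ring⟩
      · obtain ⟨t, rfl⟩ := ho; exact ⟨(t + 2) * (2 * t + 3), by ring⟩
    have hkk : k ≤ k * k := by nlinarith
    have hexp : (k + 3) * (k + 2) = k * k + 5 * k + 6 := by ring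
    omega

private lemma cover_bound (N : ℕ) (hN : 2 < N)
    (𝒞 : Finset (Set {S : Finset (Fin N) // S.card = 2}))
    (hcl : ∀ C ∈ 𝒞, (johnson N 2).IsClique C)
    (hcov : ∀ v, ∃ C ∈ 𝒞, v ∈ C) :
    N - 2 ≤ 𝒞.card := by
  classical
  set 𝒞A := 𝒞.filter (fun C => ∃ x, ∀ S ∈ C, x ∈ S.1) with h𝒞A
  set 𝒞B := 𝒞.filter (fun C => ¬ ∃ x, ∀ S ∈ C, x ∈ S.1) with h𝒞B
  have hsplit : 𝒞A.card + 𝒞B.card = 𝒞.card := Finset.card_filter_add_card_filter_not _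
  -- choose centers for type A cliques
  have hcenter : ∀ C ∈ 𝒞A, ∃ x, ∀ S ∈ C, x ∈ S.1 := fun C hC => (Finset.mem_filter.mp hC).2
  choose f hf using hcenter
  set A : Finset (Fin N) := 𝒞A.attach.image (fun C => f C.1 C.2) with hA
  have hAcard : A.card ≤ 𝒞A.card := by
    calc A.card ≤ 𝒞A.attach.card := Finset.card_image_le
      _ = 𝒞A.card := Finset.card_attach
  set M : Finset (Fin N) := Finset.univ \ A with hM
  set m := M.card with hm
  have hAN : A.card ≤ N := le_trans (Finset.card_le_univ A) (by simp)
  have hmN : m + A.card = N := by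
    rw [hm, hM, Finset.card_sdiff_of_subset (Finset.subset_univ A), Finset.card_univ, Fintype.card_fin]
    omega
  -- the pairs inside M
  set P := Finset.univ.filter (fun S : {S : Finset (Fin N) // S.card = 2} => S.1 ⊆ M) with hP
  have hPcard : P.card = m.choose 2 := by
    rw [← Finset.card_powersetCard 2 M]
    apply Finset.card_nbij (fun S => S.1)
    · intro S hS
      rw [Finset.mem_coe, Finset.mem_powersetCard]
      exact ⟨(Finset.mem_filter.mp hS).2, S.2⟩
    · intro a _ b _ hab; exact Subtype.ext hab
    · intro t ht
      rw [Finset.mem_coe, Finset.mem_powersetCard] at ht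
      exact ⟨⟨t, ht.2⟩, by simp [hP, ht.1], rfl⟩
  -- covering function
  choose g hg𝒞 hgmem using hcov
  have hgB : ∀ S ∈ P, g S ∈ 𝒞B := by
    intro S hS
    rw [h𝒞B, Finset.mem_filter]
    refine ⟨hg𝒞 S, ?_⟩
    intro hx
    have hgA : g S ∈ 𝒞A := Finset.mem_filter.mpr ⟨hg𝒞 S, hx⟩
    have hfS : f (g S) hgA ∈ S.1 := hf (g S) hgA S (hgmem S)
    have hfA : f (g S) hgA ∈ A := by
      rw [hA]
      exact Finset.mem_image.mpr ⟨⟨g S, hgA⟩, Finset.mem_attach _ _, rfl⟩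
    have := (Finset.mem_filter.mp hS).2 hfS
    rw [hM, Finset.mem_sdiff] at this
    exact this.2 hfA
  have hPle : P.card ≤ 3 * 𝒞B.card := by
    apply Finset.card_le_mul_card_image_of_maps_to hgB
    intro C hC
    have hCB := Finset.mem_filter.mp hC
    have hCcl : (johnson N 2).IsClique C := hcl C hCB.1
    have hbound := clique_card_le hN hCcl hCB.2
    refine le_trans (Finset.card_le_card ?_) hbound
    intro S hS
    rw [Finset.mem_filter] at hS
    rw [Set.Finite.mem_toFinset]
    exact hS.2 ▸ hgmem S
  have harith := arith_bound N m (by omega)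
  have h𝒞Age : N - m ≤ 𝒞A.card := by omega
  have h𝒞Bge : (m.choose 2 + 2) / 3 ≤ 𝒞B.card := by
    rw [hPcard] at hPle
    omega
  omega

theorem theta_johnson_two_ge (N : ℕ) (hN : 2 < N) :
    N - 2 ≤ theta (johnson N 2) ∧
    ∀ m : ℕ, m ≤ N → N - 2 ≤ N - m + (Nat.choose m 2 + 2) / 3 := by
  classical
  constructor
  · apply le_csInf
    · refine ⟨(Finset.univ.image (fun v : {S : Finset (Fin N) // S.card = 2} =>
        ({v} : Set _))).card, Finset.univ.image (fun v => ({v} : Set _)), rfl, ?_, ?_⟩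
      · intro C hC
        rw [Finset.mem_image] at hC
        obtain ⟨v, -, rfl⟩ := hC
        intro a ha b hb hab
        simp only [Set.mem_singleton_iff] at ha hb
        exact absurd (ha.trans hb.symm) hab
      · intro v
        exact ⟨{v}, Finset.mem_image_of_mem _ (Finset.mem_univ v), rfl⟩
    · rintro n ⟨𝒞, rfl, hcl, hcov⟩
      exact cover_bound N hN 𝒞 hcl hcov
  · intro m hm
    exact arith_bound N m hm
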